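/- Let (G,f) ∈ C with |V(G)| = ℵ₀. Then G has a perfect f-factor if and only if (G,f) is not an α-obstruction for any ordinal α. -/

import Mathlib

open Cardinal Set
open scoped Classical

namespace FFactor

variable {V : Type}

/-- Degree of `x` with respect to an edge set `F`. -/
def deg (F : Set (Sym2 V)) (x : V) : Cardinal :=
  Cardinal.mk {e : Sym2 V // e ∈ F ∧ x ∈ e}

/-- `(G, f) ∈ C`: edges are genuine 2-element sets and `f x ≤ d_E x`. -/
def inC (E : Set (Sym2 V)) (f : V → Cardinal) : Prop :=
  (∀ e ∈ E, ¬ e.IsDiag) ∧ ∀ x, f x ≤ deg E x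

/-- `F` is an `f`-factor of the graph with edge set `E`. -/
def IsFactor (E F : Set (Sym2 V)) (f : V → Cardinal) : Prop :=
  F ⊆ E ∧ ∀ x, deg F x ≤ f x

/-- `F` is a perfect `f`-factor. -/
def IsPerfect (E F : Set (Sym2 V)) (f : V → Cardinal) : Prop :=
  F ⊆ E ∧ ∀ x, deg F x = f x

/-- The function `f_{x,y}`: decrease `f` by one at `x` and `y` when `1 ≤ f v < ℵ₀`. -/
noncomputable def fxy (f : V → Cardinal) (x y : V) : V → Cardinal := fun v =>
  if (v = x ∨ v = y) ∧ 1 ≤ f v ∧ f v < ℵ₀ then (((f v).toNat - 1 : ℕ) : Cardinal) else f v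

/-- A property of pairs `(G, f)` (over arbitrary vertex types). -/
def GraphProp : Type 1 := ∀ (W : Type), Set (Sym2 W) → (W → Cardinal) → Prop

/-- `P` is a hereditary property. (`P (G,f)` entails `(G,f) ∈ C`.) -/
def Hereditary (P : GraphProp) : Prop :=
  ∀ (W : Type) (E : Set (Sym2 W)) (f : W → Cardinal), P W E f →
    inC E f ∧ ∀ x : W, 0 < f x →
      ∃ y : W, 0 < f y ∧ s(x, y) ∈ E ∧ P W (E \ {s(x, y)}) (fxy f x y)

/-- `(G,f)` is an `α`-obstruction. -/
inductive IsObstruction : ∀ {W : Type}, Ordinal.{0} → Set (Sym2 W) → (W → Cardinal) → Prop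
  | mk {W : Type} (α : Ordinal.{0}) (E : Set (Sym2 W)) (f : W → Cardinal) (x : W)
      (β : W → Ordinal.{0}) (hx : 0 < f x)
      (h : ∀ y : W, s(x, y) ∈ E → 0 < f y →
        IsObstruction (β y) (E \ {s(x, y)}) (fxy f x y))
      (hα : α = ⨆ y : {y : W // s(x, y) ∈ E ∧ 0 < f y}, Order.succ (β y.1)) :
      IsObstruction α E f

/-- The property `P₂`. -/
def P2 : GraphProp := fun _ E f => inC E f ∧ ∀ α, ¬ IsObstruction α E f

/-- The property `P₁`. -/
def P1 : GraphProp := fun _ E f => inC E f ∧ ∃ F, IsPerfect E F f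

/-- `(v_i)_{0 ≤ i < k}` is a trail (`k ≤ ω`, modelled as `k : ℕ∞`). -/
def IsTrail (E : Set (Sym2 V)) (k : ℕ∞) (v : ℕ → V) : Prop :=
  1 ≤ k ∧
  (∀ i : ℕ, 0 < i → (i : ℕ∞) < k → s(v (i - 1), v i) ∈ E) ∧
  (∀ i j : ℕ, 0 < i → 0 < j → (i : ℕ∞) < k → (j : ℕ∞) < k → i ≠ j →
    s(v (i - 1), v i) ≠ s(v (j - 1), v j))

/-- `(v_i)_{0 ≤ i < k}` is an `F`-augmenting trail. -/
def IsAugTrail (E F : Set (Sym2 V)) (f : V → Cardinal) (k : ℕ∞) (v : ℕ → V) : Prop :=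
  IsTrail E k v ∧ 1 < k ∧
  (∀ i : ℕ, 0 < i → (i : ℕ∞) < k → (s(v (i - 1), v i) ∈ F ↔ Even i)) ∧
  deg F (v 0) < f (v 0) ∧
  (k = ⊤ ∨ ∃ n : ℕ, k = (n : ℕ∞) ∧ Even n ∧
    ((v 0 ≠ v (n - 1) ∧ deg F (v (n - 1)) < f (v (n - 1))) ∨
     (v 0 = v (n - 1) ∧ deg F (v (n - 1)) + 1 < f (v (n - 1)))))

/-- The property `P₄`. -/
def P4 : GraphProp := fun _ E f =>
  inC E f ∧ ∀ F, IsFactor E F f → ∀ x, deg F x < f x →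
    ∃ (k : ℕ∞) (v : _ → _), v 0 = x ∧ IsAugTrail E F f k v

/-- `C` is closed unbounded in `o`. -/
def IsClubIn (C : Set Ordinal) (o : Ordinal) : Prop :=
  C ⊆ Set.Iio o ∧
  (∀ a < o, ∃ b ∈ C, a ≤ b) ∧
  (∀ a < o, (C ∩ Set.Iio a).Nonempty → sSup (C ∩ Set.Iio a) = a → a ∈ C)

/-- `S` is stationary in `o`. -/
def IsStationaryIn (S : Set Ordinal) (o : Ordinal) : Prop :=
  ∀ C, IsClubIn C o → (S ∩ C).Nonempty

/-- `V_α = (V \ A) ∪ f⁻¹(c)`. -/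
def subV (f : V → Cardinal) (c : Cardinal) (A : Set V) : Set V :=
  Aᶜ ∪ {x | f x = c}

/-- `E_α = {{x,y} ∈ E : x ∈ V_α, y ∈ V \ A}`. -/
def subE (E : Set (Sym2 V)) (f : V → Cardinal) (c : Cardinal) (A : Set V) : Set (Sym2 V) :=
  {e ∈ E | ∃ x y, e = s(x, y) ∧ x ∈ subV f c A ∧ y ∉ A}

/-- The edge set of a graph induced on the vertex subset `S`. -/
def inducedE (S : Set V) (E' : Set (Sym2 V)) : Set (Sym2 ↥S) :=
  {e : Sym2 ↥S | e.map Subtype.val ∈ E'}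

/-- `(A_α)_{α < c.ord}` is a `P`-destruction of `(G, f)`, `c = κ⁺`. -/
def PDestruction (P : GraphProp) (E : Set (Sym2 V)) (f : V → Cardinal)
    (c : Cardinal) (A : Ordinal → Set V) : Prop :=
  (∀ α < c.ord, ∀ β, α ≤ β → β < c.ord → A α ⊆ A β) ∧
  (∀ α < c.ord, Cardinal.mk (A α) < c) ∧
  (∀ α < c.ord, Order.IsSuccLimit α → A α = ⋃ β : Set.Iio α, A β.1) ∧
  (⋃ α : Set.Iio c.ord, A α.1) = Set.univ ∧
  IsStationaryIn {α | α < c.ord ∧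
    ¬ P ↥(subV f c (A α)) (inducedE (subV f c (A α)) (subE E f c (A α)))
        (fun x => f x.1)} c.ord

/-- `(G, f)` is `P`-destructed. -/
def PDestructed (P : GraphProp) (E : Set (Sym2 V)) (f : V → Cardinal) (c : Cardinal) : Prop :=
  ∃ A : Ordinal → Set V, PDestruction P E f c A

/-- The function `f - d_F`, for `F` a finite factor (with `ℵ₀ - n = ℵ₀`). -/
noncomputable def fsub (f : V → Cardinal) (F : Set (Sym2 V)) : V → Cardinal := fun x =>
  if f x < ℵ₀ then (((f x).toNat - (deg F x).toNat : ℕ) : Cardinal) else f x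

/-- `F` is a `κ`-perfect `f`-factor of `(V, E)`. -/
def IsKPerfect (κ : Cardinal) (E F : Set (Sym2 V)) (f : V → Cardinal) : Prop :=
  IsFactor E F f ∧ (∀ x, f x ≤ κ → deg F x = f x) ∧ ∀ x, κ < f x → 0 < deg F x



-- ===== auxiliary lemmas =====

lemma deg_def (F : Set (Sym2 V)) (x : V) :
    deg F x = Cardinal.mk ({e | e ∈ F ∧ x ∈ e} : Set (Sym2 V)) := rfl

lemma deg_congr {F G : Set (Sym2 V)} (x : V)
    (h : ∀ e : Sym2 V, x ∈ e → (e ∈ F ↔ e ∈ G)) : deg F x = deg G x := by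
  rw [deg_def, deg_def]
  have : ({e | e ∈ F ∧ x ∈ e} : Set (Sym2 V)) = {e | e ∈ G ∧ x ∈ e} :=
    Set.ext fun e => and_congr_left (h e)
  rw [this]

lemma deg_sdiff_add_one {F : Set (Sym2 V)} {e : Sym2 V} (he : e ∈ F) {x : V} (hx : x ∈ e) :
    deg (F \ {e}) x + 1 = deg F x := by
  rw [deg_def, deg_def]
  have hset : ({e' | e' ∈ F ∧ x ∈ e'} : Set (Sym2 V))
      = insert e {e' | e' ∈ F \ {e} ∧ x ∈ e'} := by
    ext e'
    simp only [Set.mem_insert_iff, Set.mem_setOf_eq, Set.mem_diff, Set.mem_singleton_iff]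
    constructor
    · rintro ⟨hF, hxe⟩
      by_cases h' : e' = e
      · exact Or.inl h'
      · exact Or.inr ⟨⟨hF, h'⟩, hxe⟩
    · rintro (rfl | ⟨⟨hF, _⟩, hxe⟩)
      · exact ⟨he, hx⟩
      · exact ⟨hF, hxe⟩
  rw [hset, Cardinal.mk_insert]
  simp only [Set.mem_setOf_eq, Set.mem_diff, Set.mem_singleton_iff]
  tauto

lemma deg_sdiff_of_not_mem {F : Set (Sym2 V)} {e : Sym2 V} {x : V} (hx : x ∉ e) :
    deg (F \ {e}) x = deg F x := by
  refine deg_congr x fun e' hxe' => ?_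
  simp only [Set.mem_diff, Set.mem_singleton_iff]
  constructor
  · rintro ⟨h, _⟩; exact h
  · intro h; exact ⟨h, fun h' => hx (h' ▸ hxe')⟩

lemma deg_mono {F G : Set (Sym2 V)} (h : F ⊆ G) (x : V) : deg F x ≤ deg G x := by
  rw [deg_def, deg_def]
  exact Cardinal.mk_le_mk_of_subset (fun e he => ⟨h he.1, he.2⟩)

lemma deg_pos {F : Set (Sym2 V)} {e : Sym2 V} (he : e ∈ F) {x : V} (hx : x ∈ e) :
    0 < deg F x := by
  rw [pos_iff_ne_zero, deg_def, Cardinal.mk_ne_zero_iff]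
  exact ⟨e, he, hx⟩

lemma le_of_add_one_le_add_one {a b : Cardinal} (ha : a < ℵ₀) (h : a + 1 ≤ b + 1) : a ≤ b := by
  rcases le_or_gt ℵ₀ b with hb | hb
  · exact le_trans ha.le hb
  · obtain ⟨n, rfl⟩ := Cardinal.lt_aleph0.mp ha
    obtain ⟨m, rfl⟩ := Cardinal.lt_aleph0.mp hb
    have : ((n + 1 : ℕ) : Cardinal) ≤ ((m + 1 : ℕ) : Cardinal) := by push_cast; exact h
    rw [Nat.cast_le] at this
    exact_mod_cast Nat.succ_le_succ_iff.mp this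

lemma eq_of_add_one_eq_add_one {a b : Cardinal} (ha : a < ℵ₀) (hb : b < ℵ₀)
    (h : a + 1 = b + 1) : a = b :=
  le_antisymm (le_of_add_one_le_add_one ha h.le) (le_of_add_one_le_add_one hb h.ge)

lemma infinite_le_of_le_add_one {a b : Cardinal} (h : ℵ₀ ≤ b) (hle : b ≤ a + 1) : b ≤ a := by
  rcases le_or_gt ℵ₀ a with ha | ha
  · rwa [Cardinal.add_one_eq ha] at hle
  · exact absurd (lt_of_le_of_lt (le_trans h hle) (Cardinal.add_lt_aleph0 ha Cardinal.one_lt_aleph0))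
      (lt_irrefl _)


lemma fxy_of_ne {f : V → Cardinal} {x y v : V} (hvx : v ≠ x) (hvy : v ≠ y) :
    fxy f x y v = f v := by
  unfold fxy
  rw [if_neg]
  rintro ⟨(rfl | rfl), -⟩ <;> simp at hvx hvy

lemma fxy_of_infinite {f : V → Cardinal} {x y v : V} (h : ¬ f v < ℵ₀) :
    fxy f x y v = f v := by
  unfold fxy
  rw [if_neg]
  rintro ⟨-, -, h'⟩; exact h h'

lemma fxy_of_zero {f : V → Cardinal} {x y v : V} (h : f v = 0) :
    fxy f x y v = f v := by
  unfold fxy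
  rw [if_neg]
  rintro ⟨-, h1, -⟩
  rw [h] at h1
  exact absurd h1 (by simp)

lemma fxy_add_one {f : V → Cardinal} {x y v : V} (hv : v = x ∨ v = y)
    (h1 : 0 < f v) (h2 : f v < ℵ₀) : fxy f x y v + 1 = f v := by
  unfold fxy
  rw [if_pos ⟨hv, Cardinal.one_le_iff_pos.mpr h1, h2⟩]
  obtain ⟨n, hn⟩ := Cardinal.lt_aleph0.mp h2
  obtain ⟨m, rfl⟩ : ∃ m, n = m + 1 := by
    rcases n with _ | m
    · exfalso; rw [hn] at h1; simp at h1
    · exact ⟨m, rfl⟩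
  rw [hn, Cardinal.toNat_natCast, Nat.add_sub_cancel]
  push_cast
  ring

lemma fxy_lt_aleph0 {f : V → Cardinal} {x y v : V} (h : f v < ℵ₀) :
    fxy f x y v < ℵ₀ := by
  unfold fxy
  split_ifs
  · exact Cardinal.nat_lt_aleph0 _
  · exact h

lemma perfect_reduced {E F : Set (Sym2 V)} {f : V → Cardinal} (hPerf : IsPerfect E F f)
    {x y : V} (heF : s(x, y) ∈ F) :
    IsPerfect (E \ {s(x, y)}) (F \ {s(x, y)}) (fxy f x y) := by
  constructor
  · exact fun e he => ⟨hPerf.1 he.1, he.2⟩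
  · intro v
    by_cases hv : v = x ∨ v = y
    · have hvmem : v ∈ s(x, y) := Sym2.mem_iff.mpr hv
      have hkey : deg (F \ {s(x, y)}) v + 1 = f v := by
        rw [deg_sdiff_add_one heF hvmem, hPerf.2 v]
      by_cases hfin : f v < ℵ₀
      · have h1 : 0 < f v := by
          rw [← hPerf.2 v]; exact deg_pos heF hvmem
        have hd : deg (F \ {s(x, y)}) v < ℵ₀ :=
          lt_of_le_of_lt (le_trans le_self_add hkey.le) hfin
        have h2 := fxy_add_one (f := f) hv h1 hfin
        exact eq_of_add_one_eq_add_one hd (fxy_lt_aleph0 hfin) (hkey.trans h2.symm)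
      · rw [fxy_of_infinite hfin]
        have hinf : ℵ₀ ≤ f v := le_of_not_gt hfin
        exact le_antisymm (le_trans le_self_add hkey.le)
          (infinite_le_of_le_add_one hinf hkey.ge)
    · push_neg at hv
      have hvmem : v ∉ s(x, y) := fun h => by
        rcases Sym2.mem_iff.mp h with rfl | rfl <;> simp at hv
      rw [fxy_of_ne hv.1 hv.2, deg_sdiff_of_not_mem hvmem, hPerf.2 v]

lemma no_perfect_of_obstruction {W : Type} {α : Ordinal.{0}} {E : Set (Sym2 W)}
    {f : W → Cardinal} (h : IsObstruction α E f) : ∀ F, ¬ IsPerfect E F f := by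
  induction h with
  | mk α E f x β hx h hα ih =>
    intro F hF
    have hpos : 0 < deg F x := by rw [hF.2 x]; exact hx
    have hne : Nonempty {e : Sym2 W // e ∈ F ∧ x ∈ e} := by
      rw [← Cardinal.mk_ne_zero_iff]
      exact (pos_iff_ne_zero.mp hpos)
    obtain ⟨e, heF, hxe⟩ := hne
    obtain ⟨y, rfl⟩ := Sym2.mem_iff_exists.mp hxe
    have hy : 0 < f y := by
      rw [← hF.2 y]; exact deg_pos heF (Sym2.mem_mk_right x y)
    exact ih y (hF.1 heF) hy (F \ {s(x, y)}) (perfect_reduced hF heF)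

def Good (E : Set (Sym2 V)) (f : V → Cardinal) : Prop :=
  inC E f ∧ ∀ α, ¬ IsObstruction α E f

lemma inC_reduced {E : Set (Sym2 V)} {f : V → Cardinal} (h : inC E f) {x y : V}
    (hxy : s(x, y) ∈ E) : inC (E \ {s(x, y)}) (fxy f x y) := by
  constructor
  · exact fun e he => h.1 e he.1
  · intro v
    by_cases hv : v = x ∨ v = y
    · have hvmem : v ∈ s(x, y) := Sym2.mem_iff.mpr hv
      have hkey : deg (E \ {s(x, y)}) v + 1 = deg E v := deg_sdiff_add_one hxy hvmem
      by_cases hfin : f v < ℵ₀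
      · by_cases h0 : f v = 0
        · rw [fxy_of_zero h0, h0]; exact zero_le
        · have h1 : 0 < f v := pos_iff_ne_zero.mpr h0
          have h2 := fxy_add_one (f := f) hv h1 hfin
          refine le_of_add_one_le_add_one (fxy_lt_aleph0 hfin) ?_
          rw [h2, hkey]
          exact h.2 v
      · rw [fxy_of_infinite hfin]
        exact infinite_le_of_le_add_one (le_of_not_gt hfin) ((h.2 v).trans hkey.ge)
    · push_neg at hv
      have hvmem : v ∉ s(x, y) := fun hm => by
        rcases Sym2.mem_iff.mp hm with rfl | rfl <;> simp at hv
      rw [fxy_of_ne hv.1 hv.2, deg_sdiff_of_not_mem hvmem]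
      exact h.2 v

lemma good_step {E : Set (Sym2 V)} {f : V → Cardinal} (h : Good E f) {x : V}
    (hx : 0 < f x) :
    ∃ y, 0 < f y ∧ s(x, y) ∈ E ∧ Good (E \ {s(x, y)}) (fxy f x y) := by
  by_contra hcon
  push_neg at hcon
  have hβ : ∀ y, s(x, y) ∈ E → 0 < f y →
      ∃ α, IsObstruction α (E \ {s(x, y)}) (fxy f x y) := by
    intro y hyE hy
    have hnot := hcon y hy hyE
    by_contra h'
    push_neg at h'
    exact hnot ⟨inC_reduced h.1 hyE, h'⟩
  classical
  set β : V → Ordinal.{0} := fun y =>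
    if hc : s(x, y) ∈ E ∧ 0 < f y then (hβ y hc.1 hc.2).choose else 0 with hβdef
  refine h.2 _ (IsObstruction.mk _ E f x β hx (fun y hyE hy => ?_) rfl)
  have : β y = (hβ y hyE hy).choose := dif_pos ⟨hyE, hy⟩
  rw [this]
  exact (hβ y hyE hy).choose_spec

def St (V : Type) := {p : Set (Sym2 V) × (V → Cardinal) // Good p.1 p.2}

noncomputable def stepSt (x : V) (p : St V) : St V × Option (Sym2 V) :=
  if h : 0 < p.1.2 x then
    ⟨⟨(p.1.1 \ {s(x, (good_step p.2 h).choose)}, fxy p.1.2 x (good_step p.2 h).choose),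
      (good_step p.2 h).choose_spec.2.2⟩, some s(x, (good_step p.2 h).choose)⟩
  else ⟨p, none⟩

lemma stepSt_spec (x : V) (p : St V) :
    ((stepSt x p).2 = none ∧ (stepSt x p).1 = p ∧ p.1.2 x = 0) ∨
      ∃ y, 0 < p.1.2 x ∧ 0 < p.1.2 y ∧ s(x, y) ∈ p.1.1 ∧
        (stepSt x p).2 = some s(x, y) ∧
        (stepSt x p).1.1.1 = p.1.1 \ {s(x, y)} ∧ (stepSt x p).1.1.2 = fxy p.1.2 x y := by
  unfold stepSt
  split_ifs with h
  · exact Or.inr ⟨(good_step p.2 h).choose, h, (good_step p.2 h).choose_spec.1,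
      (good_step p.2 h).choose_spec.2.1, rfl, rfl, rfl⟩
  · exact Or.inl ⟨rfl, rfl, le_antisymm (not_lt.mp h) zero_le⟩

noncomputable def chain (p0 : St V) (sch : ℕ → V) : ℕ → St V × Option (Sym2 V)
  | 0 => ⟨p0, none⟩
  | n + 1 => stepSt (sch n) (chain p0 sch n).1

section Chain

variable (p0 : St V) (sch : ℕ → V)

noncomputable def En (n : ℕ) : Set (Sym2 V) := ((chain p0 sch n).1).1.1

noncomputable def fn (n : ℕ) : V → Cardinal := ((chain p0 sch n).1).1.2

noncomputable def pk (n : ℕ) : Option (Sym2 V) := (chain p0 sch (n + 1)).2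

def Pm (n : ℕ) (v : V) : Prop := ∃ e, pk p0 sch n = some e ∧ v ∈ e

noncomputable def cnt (n : ℕ) (v : V) : ℕ :=
  ((Finset.range n).filter (fun m => Pm p0 sch m v)).card

noncomputable def Ffin : Set (Sym2 V) := {e | ∃ n, pk p0 sch n = some e}

lemma chain_spec (n : ℕ) :
    (pk p0 sch n = none ∧ En p0 sch (n + 1) = En p0 sch n ∧
      fn p0 sch (n + 1) = fn p0 sch n ∧ fn p0 sch n (sch n) = 0) ∨
      ∃ y, 0 < fn p0 sch n (sch n) ∧ 0 < fn p0 sch n y ∧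
        s(sch n, y) ∈ En p0 sch n ∧ pk p0 sch n = some s(sch n, y) ∧
        En p0 sch (n + 1) = En p0 sch n \ {s(sch n, y)} ∧
        fn p0 sch (n + 1) = fxy (fn p0 sch n) (sch n) y := by
  have hch : chain p0 sch (n + 1) = stepSt (sch n) (chain p0 sch n).1 := rfl
  rcases stepSt_spec (sch n) (chain p0 sch n).1 with ⟨h1, h2, h3⟩ | ⟨y, h1, h2, h3, h4, h5, h6⟩
  · left
    refine ⟨by rw [pk, hch]; exact h1, ?_, ?_, h3⟩
    · show ((chain p0 sch (n+1)).1).1.1 = _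
      rw [hch, h2]; rfl
    · show ((chain p0 sch (n+1)).1).1.2 = _
      rw [hch, h2]; rfl
  · right
    exact ⟨y, h1, h2, h3, by rw [pk, hch]; exact h4,
      by show ((chain p0 sch (n+1)).1).1.1 = _; rw [hch]; exact h5,
      by show ((chain p0 sch (n+1)).1).1.2 = _; rw [hch]; exact h6⟩

lemma En_succ_subset (n : ℕ) : En p0 sch (n + 1) ⊆ En p0 sch n := by
  rcases chain_spec p0 sch n with ⟨-, h, -, -⟩ | ⟨y, -, -, -, -, h, -⟩
  · rw [h]
  · rw [h]; exact Set.diff_subset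

lemma En_mono : ∀ {n m : ℕ}, n ≤ m → En p0 sch m ⊆ En p0 sch n := by
  intro n m h
  induction m with
  | zero => rw [Nat.le_zero.mp h]
  | succ k ih =>
    rcases Nat.lt_or_ge n (k+1) with h' | h'
    · exact Set.Subset.trans (En_succ_subset p0 sch k) (ih (Nat.lt_succ_iff.mp h'))
    · rw [le_antisymm h h']

lemma pk_mem {n : ℕ} {e : Sym2 V} (h : pk p0 sch n = some e) :
    e ∈ En p0 sch n ∧ e ∉ En p0 sch (n + 1) := by
  rcases chain_spec p0 sch n with ⟨h1, -, -, -⟩ | ⟨y, -, -, h3, h4, h5, -⟩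
  · rw [h1] at h; exact absurd h (by simp)
  · rw [h4] at h
    obtain rfl := Option.some_injective _ h
    exact ⟨h3, by rw [h5]; simp⟩

lemma pk_inj {n m : ℕ} {e : Sym2 V} (hn : pk p0 sch n = some e) (hm : pk p0 sch m = some e) :
    n = m := by
  by_contra hne
  rcases Nat.lt_or_ge n m with h | h
  · exact (pk_mem p0 sch hn).2 (En_mono p0 sch h (pk_mem p0 sch hm).1)
  · have h' : m < n := lt_of_le_of_ne h (Ne.symm hne)
    exact (pk_mem p0 sch hm).2 (En_mono p0 sch h' (pk_mem p0 sch hn).1)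

end Chain

section Chain2

variable (p0 : St V) (sch : ℕ → V)

lemma fn_zero : fn p0 sch 0 = p0.1.2 := rfl

lemma En_zero : En p0 sch 0 = p0.1.1 := rfl

lemma fn_infinite {v : V} (hv : ¬ p0.1.2 v < ℵ₀) (n : ℕ) : fn p0 sch n v = p0.1.2 v := by
  induction n with
  | zero => rfl
  | succ k ih =>
    rcases chain_spec p0 sch k with ⟨-, -, h, -⟩ | ⟨y, -, -, -, -, -, h⟩
    · rw [h]; exact ih
    · rw [h, fxy_of_infinite (by rw [ih]; exact hv)]; exact ih

lemma fn_zero_succ {v : V} {n : ℕ} (h0 : fn p0 sch n v = 0) : fn p0 sch (n + 1) v = 0 := by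
  rcases chain_spec p0 sch n with ⟨-, -, h, -⟩ | ⟨y, hx, hy, -, -, -, h⟩
  · rw [h]; exact h0
  · rw [h]
    have hvx : v ≠ sch n := fun hh => by rw [← hh, h0] at hx; exact lt_irrefl _ hx
    have hvy : v ≠ y := fun hh => by rw [← hh, h0] at hy; exact lt_irrefl _ hy
    rw [fxy_of_ne hvx hvy]; exact h0

lemma fn_zero_of_le {v : V} {n m : ℕ} (hnm : n ≤ m) (h0 : fn p0 sch n v = 0) :
    fn p0 sch m v = 0 := by
  induction m with
  | zero => rw [Nat.le_zero.mp hnm] at h0; exact h0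
  | succ k ih =>
    rcases Nat.lt_or_ge n (k+1) with h' | h'
    · exact fn_zero_succ p0 sch (ih (Nat.lt_succ_iff.mp h'))
    · rw [← le_antisymm hnm h']; exact h0

lemma cnt_succ_of_not {v : V} {n : ℕ} (h : ¬ Pm p0 sch n v) :
    cnt p0 sch (n + 1) v = cnt p0 sch n v := by
  unfold cnt
  rw [Finset.range_add_one, Finset.filter_insert, if_neg h]

lemma cnt_succ_of_mem {v : V} {n : ℕ} (h : Pm p0 sch n v) :
    cnt p0 sch (n + 1) v = cnt p0 sch n v + 1 := by
  unfold cnt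
  rw [Finset.range_add_one, Finset.filter_insert, if_pos h,
    Finset.card_insert_of_notMem (by simp)]

lemma cnt_mono {v : V} {n m : ℕ} (h : n ≤ m) : cnt p0 sch n v ≤ cnt p0 sch m v := by
  unfold cnt
  exact Finset.card_le_card (Finset.filter_subset_filter _ (Finset.range_subset_range.mpr h))

lemma fn_add_cnt {v : V} (hv : p0.1.2 v < ℵ₀) (n : ℕ) :
    fn p0 sch n v + (cnt p0 sch n v : Cardinal) = p0.1.2 v := by
  induction n with
  | zero => simp [fn_zero, cnt]
  | succ k ih =>
    have hfink : fn p0 sch k v < ℵ₀ :=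
      lt_of_le_of_lt (le_trans le_self_add ih.le) hv
    rcases chain_spec p0 sch k with ⟨hpk, -, h, -⟩ | ⟨y, hx, hy, -, hpk, -, h⟩
    · have hnot : ¬ Pm p0 sch k v := by rintro ⟨e, he, -⟩; rw [hpk] at he; simp at he
      rw [h, cnt_succ_of_not p0 sch hnot]; exact ih
    · by_cases hmem : v = sch k ∨ v = y
      · have hPm : Pm p0 sch k v := ⟨s(sch k, y), hpk, Sym2.mem_iff.mpr hmem⟩
        have hpos : 0 < fn p0 sch k v := by rcases hmem with rfl | rfl <;> assumption
        have hfxy := fxy_add_one (f := fn p0 sch k) hmem hpos hfink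
        rw [h, cnt_succ_of_mem p0 sch hPm]
        push_cast
        rw [← ih, ← hfxy]
        ring
      · push_neg at hmem
        have hnot : ¬ Pm p0 sch k v := by
          rintro ⟨e, he, hve⟩
          rw [hpk] at he
          obtain rfl := Option.some_injective _ he
          rcases Sym2.mem_iff.mp hve with rfl | rfl <;> simp at hmem
        rw [h, fxy_of_ne hmem.1 hmem.2, cnt_succ_of_not p0 sch hnot]
        exact ih

lemma fn_lt_aleph0 {v : V} (hv : p0.1.2 v < ℵ₀) (n : ℕ) : fn p0 sch n v < ℵ₀ :=
  lt_of_le_of_lt (le_trans le_self_add (fn_add_cnt p0 sch hv n).le) hv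

lemma cnt_le {v : V} (hv : p0.1.2 v < ℵ₀) (n : ℕ) :
    cnt p0 sch n v ≤ (p0.1.2 v).toNat := by
  have h1 : (cnt p0 sch n v : Cardinal) ≤ p0.1.2 v :=
    le_trans le_add_self (fn_add_cnt p0 sch hv n).le
  have h2 : p0.1.2 v = ((p0.1.2 v).toNat : Cardinal) := (Cardinal.cast_toNat_of_lt_aleph0 hv).symm
  rw [h2, Nat.cast_le] at h1
  exact h1

lemma pm_of_sched {n : ℕ} (h : 0 < fn p0 sch n (sch n)) : Pm p0 sch n (sch n) := by
  rcases chain_spec p0 sch n with ⟨-, -, -, h0⟩ | ⟨y, -, -, -, hpk, -, -⟩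
  · rw [h0] at h; exact absurd h (lt_irrefl _)
  · exact ⟨s(sch n, y), hpk, Sym2.mem_mk_left _ _⟩

lemma not_pm_of_zero {v : V} {n : ℕ} (h0 : fn p0 sch n v = 0) : ¬ Pm p0 sch n v := by
  rintro ⟨e, he, hve⟩
  rcases chain_spec p0 sch n with ⟨hpk, -, -, -⟩ | ⟨y, hx, hy, -, hpk, -, -⟩
  · rw [hpk] at he; simp at he
  · rw [hpk] at he
    obtain rfl := Option.some_injective _ he
    rcases Sym2.mem_iff.mp hve with rfl | rfl
    · rw [h0] at hx; exact absurd hx (lt_irrefl _)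
    · rw [h0] at hy; exact absurd hy (lt_irrefl _)

end Chain2

section Chain3

variable (p0 : St V) (sch : ℕ → V)

lemma Ffin_subset : Ffin p0 sch ⊆ p0.1.1 := by
  rintro e ⟨n, hn⟩
  exact En_mono p0 sch (Nat.zero_le n) (pk_mem p0 sch hn).1

lemma deg_Ffin (v : V) : deg (Ffin p0 sch) v = #{n : ℕ | Pm p0 sch n v} := by
  have hbij : Function.Bijective (fun n : {n : ℕ // Pm p0 sch n v} =>
      (⟨n.2.choose, ⟨⟨n.1, n.2.choose_spec.1⟩, n.2.choose_spec.2⟩⟩ :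
        {e : Sym2 V // e ∈ Ffin p0 sch ∧ v ∈ e})) := by
    constructor
    · rintro ⟨n, hn⟩ ⟨m, hm⟩ h
      have he : hn.choose = hm.choose := congrArg Subtype.val h
      have := pk_inj p0 sch hn.choose_spec.1 (he ▸ hm.choose_spec.1)
      exact Subtype.ext this
    · rintro ⟨e, ⟨n, hn⟩, hv⟩
      refine ⟨⟨n, ⟨e, hn, hv⟩⟩, ?_⟩
      have : (⟨e, hn, hv⟩ : Pm p0 sch n v).choose = e := by
        have h1 := (⟨e, hn, hv⟩ : Pm p0 sch n v).choose_spec.1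
        exact Option.some_injective _ (h1.symm.trans hn)
      exact Subtype.ext this
  exact (Cardinal.mk_congr (Equiv.ofBijective _ hbij)).symm

lemma deg_Ffin_eq (hsch : ∀ (w : V) (m : ℕ), ∃ n, m ≤ n ∧ sch n = w)
    (hcount : ∀ w : V, p0.1.2 w ≤ ℵ₀) (v : V) :
    deg (Ffin p0 sch) v = p0.1.2 v := by
  rw [deg_Ffin]
  by_cases hfin : p0.1.2 v < ℵ₀
  · -- finite case
    have hzero : ∃ N, fn p0 sch N v = 0 := by
      by_contra hno
      push_neg at hno
      have hstep : ∀ j : ℕ, ∃ n, j ≤ cnt p0 sch n v := by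
        intro j
        induction j with
        | zero => exact ⟨0, Nat.zero_le _⟩
        | succ i ih =>
          obtain ⟨n, hn⟩ := ih
          obtain ⟨m, hm, hms⟩ := hsch v n
          have hpos : 0 < fn p0 sch m v := pos_iff_ne_zero.mpr (hno m)
          have hpm : Pm p0 sch m v := by
            rw [← hms] at hpos ⊢
            exact pm_of_sched p0 sch hpos
          refine ⟨m + 1, ?_⟩
          rw [cnt_succ_of_mem p0 sch hpm]
          exact Nat.succ_le_succ (le_trans hn (cnt_mono p0 sch hm))
      obtain ⟨n, hn⟩ := hstep ((p0.1.2 v).toNat + 1)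
      exact absurd (le_trans hn (cnt_le p0 sch hfin n)) (by omega)
    obtain ⟨N, hN⟩ := hzero
    have hafter : ∀ m, N ≤ m → ¬ Pm p0 sch m v := fun m hm =>
      not_pm_of_zero p0 sch (fn_zero_of_le p0 sch hm hN)
    have hset : {n : ℕ | Pm p0 sch n v}
        = ((Finset.range N).filter (fun m => Pm p0 sch m v) : Finset ℕ) := by
      ext n
      simp only [Set.mem_setOf_eq, Finset.coe_filter, Finset.mem_range]
      constructor
      · intro h
        refine ⟨?_, h⟩
        by_contra hn
        exact hafter n (Nat.le_of_not_lt hn) h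
      · exact fun h => h.2
    rw [hset]
    rw [show #(↑((Finset.range N).filter (fun m => Pm p0 sch m v)) : Set ℕ)
        = (((Finset.range N).filter (fun m => Pm p0 sch m v)).card : Cardinal) from
      Cardinal.mk_coe_finset]
    have := fn_add_cnt p0 sch hfin N
    rw [hN, zero_add] at this
    exact this
  · -- infinite case
    have hf : p0.1.2 v = ℵ₀ := le_antisymm (hcount v) (le_of_not_gt hfin)
    have hinf : {n : ℕ | Pm p0 sch n v}.Infinite := by
      intro hfinset
      obtain ⟨b, hb⟩ := hfinset.bddAbove
      obtain ⟨n, hn, hns⟩ := hsch v (b + 1)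
      have hpos : 0 < fn p0 sch n v := by
        rw [fn_infinite p0 sch hfin n, hf]
        exact aleph0_pos
      have hpm : Pm p0 sch n v := by
        rw [← hns] at hpos ⊢
        exact pm_of_sched p0 sch hpos
      have := hb hpm
      omega
    rw [hf]
    refine le_antisymm Cardinal.mk_le_aleph0 ?_
    rw [Cardinal.aleph0_le_mk_iff]
    exact hinf.to_subtype

end Chain3

-- ===== end aux =====

/-- Corollary 1(1). -/
theorem statement_6 (V : Type) (E : Set (Sym2 V)) (f : V → Cardinal)
    (hC : inC E f) (hV : Cardinal.mk V = ℵ₀) :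
    (∃ F, IsPerfect E F f) ↔ ∀ α, ¬ IsObstruction α E f := by
  constructor
  · rintro ⟨F, hF⟩ α hobs
    exact no_perfect_of_obstruction hobs F hF
  · intro h
    obtain ⟨eqv⟩ : Nonempty (V ≃ ℕ) := Cardinal.eq.mp (by rw [hV, Cardinal.mk_nat])
    set sch : ℕ → V := fun n => eqv.symm (Nat.unpair n).1 with hschdef
    have hsch : ∀ (w : V) (m : ℕ), ∃ n, m ≤ n ∧ sch n = w := by
      intro w m
      refine ⟨Nat.pair (eqv w) m, Nat.right_le_pair _ _, ?_⟩
      rw [hschdef]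
      simp [Nat.unpair_pair]
    have hcV : Countable V := Cardinal.mk_le_aleph0_iff.mp hV.le
    have hcount : ∀ w : V, f w ≤ ℵ₀ := by
      intro w
      refine le_trans (hC.2 w) (le_trans (Cardinal.mk_subtype_le _)
        (Cardinal.mk_le_aleph0 (α := Sym2 V)))
    set p0 : St V := ⟨(E, f), ⟨hC, h⟩⟩ with hp0
    refine ⟨Ffin p0 sch, ?_, ?_⟩
    · exact Ffin_subset p0 sch
    · exact deg_Ffin_eq p0 sch hsch hcount

end FFactor
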